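/- Let I = (X, C) be an ordering-CSP instance with predicate NBTW, where C is a finitely supported probability distribution over triples of pairwise distinct variables from the finite set X. Build an arc-weighted directed graph G whose vertex set is X together with two fresh vertices a_c, b_c for each triple c = (x,y,z) in the support of C, where each such triple contributes the six arcs b_c→x, x→a_c, a_c→z, z→b_c, b_c→y, y→a_c, each of weight C(c)/6. Then the maximum, over injective orderings O of the vertices of G into ℤ, of the total weight of arcs (u,v) with O(u) < O(v) equals (5/6)·val(I) + (4/6)·(1 − val(I)) = (4 + val(I))/6. -/

import Mathlib

open Classical Finset

noncomputable section
namespace OCSPPaper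

/-- A permutation `σ` is compatible with the tuple `a` if `σ i < σ j` whenever `a i < a j`. -/
def compatiblePerm {m : ℕ} (a : Fin m → ℤ) (σ : Equiv.Perm (Fin m)) : Prop :=
  ∀ i j : Fin m, a i < a j → σ i < σ j

/-- The extension of an ordering predicate `P ⊆ S_m` to arbitrary integer tuples:
the fraction of compatible permutations that belong to `P`. -/
noncomputable def extPred {m : ℕ} (P : Finset (Equiv.Perm (Fin m))) (a : Fin m → ℤ) : ℝ :=
  ((Finset.univ.filter fun σ => compatiblePerm a σ ∧ σ ∈ P).card : ℝ) /
    ((Finset.univ.filter fun σ => compatiblePerm a σ).card : ℝ)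

/-- The non-betweenness predicate `NBTW ⊆ S_3`. -/
def nbtwPerm3 : Finset (Equiv.Perm (Fin 3)) :=
  Finset.univ.filter fun σ => σ 2 ≠ 1

/-- Value of an NBTW ordering-CSP instance `(X, C)`: the best, over injective orderings
`O : X → ℤ`, expected extended NBTW value of a random constraint. -/
noncomputable def nbtwVal {X : Type} [Fintype X] (C : X × X × X → ℝ) : ℝ :=
  ⨆ O : {O : X → ℤ // Function.Injective O},
    ∑ c : X × X × X, C c * extPred nbtwPerm3 ![O.1 c.1, O.1 c.2.1, O.1 c.2.2]

/-- Vertices of the gadget graph: the original variables together with two fresh vertices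
`a_c` (tagged `true`) and `b_c` (tagged `false`) for each constraint in the support of `C`. -/
abbrev GadgetVerts (X : Type) (C : X × X × X → ℝ) : Type :=
  X ⊕ ({c : X × X × X // C c ≠ 0} × Bool)

/-- The six arcs `b→x, x→a, a→z, z→b, b→y, y→a` of the MAS gadget of a constraint
`c = (x, y, z)`. -/
def gadgetArcsOf {X : Type} {C : X × X × X → ℝ} (c : {c : X × X × X // C c ≠ 0}) :
    List (GadgetVerts X C × GadgetVerts X C) :=
  let xv : GadgetVerts X C := Sum.inl c.1.1
  let yv : GadgetVerts X C := Sum.inl c.1.2.1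
  let zv : GadgetVerts X C := Sum.inl c.1.2.2
  let av : GadgetVerts X C := Sum.inr (c, true)
  let bv : GadgetVerts X C := Sum.inr (c, false)
  [(bv, xv), (xv, av), (av, zv), (zv, bv), (bv, yv), (yv, av)]

/-- The total weight of arcs of the gadget graph satisfied by the ordering `O`; each of the
six arcs of the gadget of a constraint `c` has weight `C(c)/6`. -/
noncomputable def gadgetWeight {X : Type} [Fintype X] (C : X × X × X → ℝ)
    (O : GadgetVerts X C → ℤ) : ℝ :=
  ∑ c : {c : X × X × X // C c ≠ 0},
    C c.1 / 6 * (((gadgetArcsOf c).filter fun p => decide (O p.1 < O p.2)).length : ℝ)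

/-! ### Auxiliary material -/

instance decCompat {m : ℕ} (a : Fin m → ℤ) (σ : Equiv.Perm (Fin m)) :
    Decidable (compatiblePerm a σ) := by unfold compatiblePerm; infer_instance

lemma filter_irrel {α : Type*} (p : α → Prop) (d1 d2 : DecidablePred p) (s : Finset α) :
    @Finset.filter α p d1 s = @Finset.filter α p d2 s :=
  @Finset.filter_congr α p p d1 d2 s (fun _ _ => Iff.rfl)

lemma extPred_eval {m : ℕ} (P : Finset (Equiv.Perm (Fin m))) (a : Fin m → ℤ) :
    extPred P a =
      (((Finset.univ.filter fun σ => compatiblePerm a σ ∧ σ ∈ P).card : ℝ) /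
        ((Finset.univ.filter fun σ => compatiblePerm a σ).card : ℝ)) := by
  unfold extPred
  rw [filter_irrel _ _ (fun σ => instDecidableAnd), filter_irrel _ _ (fun σ => decCompat a σ)]

lemma extPred_congr {m : ℕ} (P : Finset (Equiv.Perm (Fin m))) {a b : Fin m → ℤ}
    (h : ∀ i j, a i < a j ↔ b i < b j) : extPred P a = extPred P b := by
  have hc : compatiblePerm a = compatiblePerm b := by
    funext σ
    exact propext ⟨fun H i j hb => H i j ((h i j).2 hb), fun H i j ha => H i j ((h i j).1 ha)⟩
  unfold extPred
  rw [hc]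

lemma extPred_distinct {u v w : ℤ} (huv : u ≠ v) (huw : u ≠ w) (hvw : v ≠ w) :
    extPred nbtwPerm3 ![u, v, w] =
      if (u < w ∧ w < v) ∨ (v < w ∧ w < u) then 0 else 1 := by
  have key : ∀ c0 c1 c2 : ℤ, (u < v ↔ c0 < c1) → (v < u ↔ c1 < c0) →
      (u < w ↔ c0 < c2) → (w < u ↔ c2 < c0) → (v < w ↔ c1 < c2) → (w < v ↔ c2 < c1) →
      extPred nbtwPerm3 ![u, v, w] = extPred nbtwPerm3 ![c0, c1, c2] := by
    intro c0 c1 c2 h1 h2 h3 h4 h5 h6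
    apply extPred_congr
    intro i j
    fin_cases i <;> fin_cases j <;>
      simp only [Matrix.cons_val_zero, Matrix.cons_val_one, Matrix.head_cons,
        Matrix.cons_val_two, Matrix.tail_cons, Fin.mk_zero, Fin.mk_one] <;>
      first
        | exact Iff.intro (fun h => absurd h (lt_irrefl _)) (fun h => absurd h (lt_irrefl _))
        | assumption
  have e012 : extPred nbtwPerm3 ![(0:ℤ),1,2] = 1 := by
    rw [extPred_eval,
      show (Finset.univ.filter fun σ => compatiblePerm ![(0:ℤ),1,2] σ ∧ σ ∈ nbtwPerm3).card = 1
        from by decide,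
      show (Finset.univ.filter fun σ => compatiblePerm ![(0:ℤ),1,2] σ).card = 1 from by decide]
    norm_num
  have e021 : extPred nbtwPerm3 ![(0:ℤ),2,1] = 0 := by
    rw [extPred_eval,
      show (Finset.univ.filter fun σ => compatiblePerm ![(0:ℤ),2,1] σ ∧ σ ∈ nbtwPerm3).card = 0
        from by decide,
      show (Finset.univ.filter fun σ => compatiblePerm ![(0:ℤ),2,1] σ).card = 1 from by decide]
    norm_num
  have e102 : extPred nbtwPerm3 ![(1:ℤ),0,2] = 1 := by
    rw [extPred_eval,
      show (Finset.univ.filter fun σ => compatiblePerm ![(1:ℤ),0,2] σ ∧ σ ∈ nbtwPerm3).card = 1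
        from by decide,
      show (Finset.univ.filter fun σ => compatiblePerm ![(1:ℤ),0,2] σ).card = 1 from by decide]
    norm_num
  have e201 : extPred nbtwPerm3 ![(2:ℤ),0,1] = 0 := by
    rw [extPred_eval,
      show (Finset.univ.filter fun σ => compatiblePerm ![(2:ℤ),0,1] σ ∧ σ ∈ nbtwPerm3).card = 0
        from by decide,
      show (Finset.univ.filter fun σ => compatiblePerm ![(2:ℤ),0,1] σ).card = 1 from by decide]
    norm_num
  have e120 : extPred nbtwPerm3 ![(1:ℤ),2,0] = 1 := by
    rw [extPred_eval,
      show (Finset.univ.filter fun σ => compatiblePerm ![(1:ℤ),2,0] σ ∧ σ ∈ nbtwPerm3).card = 1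
        from by decide,
      show (Finset.univ.filter fun σ => compatiblePerm ![(1:ℤ),2,0] σ).card = 1 from by decide]
    norm_num
  have e210 : extPred nbtwPerm3 ![(2:ℤ),1,0] = 1 := by
    rw [extPred_eval,
      show (Finset.univ.filter fun σ => compatiblePerm ![(2:ℤ),1,0] σ ∧ σ ∈ nbtwPerm3).card = 1
        from by decide,
      show (Finset.univ.filter fun σ => compatiblePerm ![(2:ℤ),1,0] σ).card = 1 from by decide]
    norm_num
  rcases lt_trichotomy u v with huv' | huv' | huv' <;>
    [skip; exact absurd huv' huv; skip] <;>
  rcases lt_trichotomy u w with huw' | huw' | huw' <;>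
    [skip; exact absurd huw' huw; skip; skip; exact absurd huw' huw; skip] <;>
  rcases lt_trichotomy v w with hvw' | hvw' | hvw' <;>
    first
      | exact absurd hvw' hvw
      | (first
          | (rw [key 0 1 2 (by omega) (by omega) (by omega) (by omega) (by omega) (by omega), e012,
              if_neg (by omega)])
          | (rw [key 0 2 1 (by omega) (by omega) (by omega) (by omega) (by omega) (by omega), e021,
              if_pos (by omega)])
          | (rw [key 1 0 2 (by omega) (by omega) (by omega) (by omega) (by omega) (by omega), e102,
              if_neg (by omega)])
          | (rw [key 2 0 1 (by omega) (by omega) (by omega) (by omega) (by omega) (by omega), e201,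
              if_pos (by omega)])
          | (rw [key 1 2 0 (by omega) (by omega) (by omega) (by omega) (by omega) (by omega), e120,
              if_neg (by omega)])
          | (rw [key 2 1 0 (by omega) (by omega) (by omega) (by omega) (by omega) (by omega), e210,
              if_neg (by omega)]))

variable {X : Type} [Fintype X]

/-- The objective value of an ordering `O` for the instance `C`. -/
noncomputable def objVal (C : X × X × X → ℝ) (O : X → ℤ) : ℝ :=
  ∑ c : X × X × X, C c * extPred nbtwPerm3 ![O c.1, O c.2.1, O c.2.2]

lemma nbtwVal_eq (C : X × X × X → ℝ) :
    nbtwVal C = ⨆ O : {O : X → ℤ // Function.Injective O}, objVal C O.1 := rfl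

lemma objVal_congr (C : X × X × X → ℝ) {O O' : X → ℤ}
    (h : ∀ x y, O x < O y ↔ O' x < O' y) : objVal C O = objVal C O' := by
  unfold objVal
  refine Finset.sum_congr rfl fun c _ => ?_
  congr 1
  apply extPred_congr
  intro i j
  fin_cases i <;> fin_cases j <;>
    simp only [Matrix.cons_val_zero, Matrix.cons_val_one, Matrix.head_cons,
      Matrix.cons_val_two, Matrix.tail_cons, Fin.mk_zero, Fin.mk_one] <;>
    exact h _ _

lemma range_finite (C : X × X × X → ℝ) :
    (Set.range fun O : {O : X → ℤ // Function.Injective O} => objVal C O.1).Finite := by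
  classical
  set F : {O : X → ℤ // Function.Injective O} → (X → X → Bool) :=
    fun O x y => decide (O.1 x < O.1 y) with hF
  have key : ∀ O O', F O = F O' → objVal C O.1 = objVal C O'.1 := by
    intro O O' h
    apply objVal_congr
    intro x y
    have := congrFun (congrFun h x) y
    simpa [F, decide_eq_decide] using this
  have hsub : (Set.range fun O : {O : X → ℤ // Function.Injective O} => objVal C O.1) ⊆
      (fun R : X → X → Bool =>
        if h : ∃ O : {O : X → ℤ // Function.Injective O}, F O = R then
          objVal C (Classical.choose h).1 else 0) '' Set.univ := by
    rintro _ ⟨O, rfl⟩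
    refine ⟨F O, Set.mem_univ _, ?_⟩
    show (if h : ∃ O' : {O : X → ℤ // Function.Injective O}, F O' = F O then
        objVal C (Classical.choose h).1 else 0) = objVal C O.1
    rw [dif_pos ⟨O, rfl⟩]
    exact key _ _ (Classical.choose_spec (⟨O, rfl⟩ :
      ∃ O' : {O : X → ℤ // Function.Injective O}, F O' = F O))
  exact (Set.finite_univ.image _).subset hsub

instance instNE : Nonempty {O : X → ℤ // Function.Injective O} :=
  ⟨⟨fun x => ((Fintype.equivFin X) x : ℤ), fun a b h => by
    simp only at h
    apply (Fintype.equivFin X).injective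
    exact Fin.ext (by exact_mod_cast h)⟩⟩

lemma le_nbtwVal (C : X × X × X → ℝ) (O : {O : X → ℤ // Function.Injective O}) :
    objVal C O.1 ≤ nbtwVal C := by
  rw [nbtwVal_eq]
  exact le_ciSup (range_finite C).bddAbove O

lemma nbtwVal_attained (C : X × X × X → ℝ) :
    ∃ O : {O : X → ℤ // Function.Injective O}, objVal C O.1 = nbtwVal C := by
  have hne : (Set.range fun O : {O : X → ℤ // Function.Injective O} =>
      objVal C O.1).Nonempty := Set.range_nonempty _
  have hmem := hne.csSup_mem (range_finite C)
  rw [nbtwVal_eq]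
  exact hmem

/-! ### Counting lemmas for the six gadget arcs -/

lemma len_le_five {V : Type*} (O : V → ℤ) (bv xv av zv yv : V) :
    (([(bv,xv),(xv,av),(av,zv),(zv,bv),(bv,yv),(yv,av)] : List (V×V)).filter
      fun p => decide (O p.1 < O p.2)).length ≤ 5 := by
  simp only [List.filter_cons, List.filter_nil, decide_eq_true_eq]
  split_ifs <;> simp <;> omega

lemma len_le_four {V : Type*} (O : V → ℤ) (bv xv av zv yv : V)
    (h : (O xv < O zv ∧ O zv < O yv) ∨ (O yv < O zv ∧ O zv < O xv)) :
    (([(bv,xv),(xv,av),(av,zv),(zv,bv),(bv,yv),(yv,av)] : List (V×V)).filter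
      fun p => decide (O p.1 < O p.2)).length ≤ 4 := by
  simp only [List.filter_cons, List.filter_nil, decide_eq_true_eq]
  split_ifs <;> simp <;> omega

lemma len_four {V : Type*} (O : V → ℤ) (bv xv av zv yv : V)
    (hbx : O bv < O xv) (hxa : O xv < O av) (hby : O bv < O yv) (hya : O yv < O av)
    (hna : ¬ O av < O zv) (hnb : ¬ O zv < O bv) :
    (([(bv,xv),(xv,av),(av,zv),(zv,bv),(bv,yv),(yv,av)] : List (V×V)).filter
      fun p => decide (O p.1 < O p.2)).length = 4 := by
  simp only [List.filter_cons, List.filter_nil, decide_eq_true_eq]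
  split_ifs <;> simp <;> omega

lemma len_five {V : Type*} (O : V → ℤ) (bv xv av zv yv : V)
    (hbx : O bv < O xv) (hxa : O xv < O av) (hby : O bv < O yv) (hya : O yv < O av)
    (hone : (O av < O zv ∧ ¬ O zv < O bv) ∨ (O zv < O bv ∧ ¬ O av < O zv)) :
    (([(bv,xv),(xv,av),(av,zv),(zv,bv),(bv,yv),(yv,av)] : List (V×V)).filter
      fun p => decide (O p.1 < O p.2)).length = 5 := by
  simp only [List.filter_cons, List.filter_nil, decide_eq_true_eq]
  split_ifs <;> simp <;> omega

/-! ### The optimal ordering of the gadget graph -/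

/-- The ordering of the gadget graph built from an ordering `O0` of the variables. -/
def buildO (C : X × X × X → ℝ) (O0 : X → ℤ)
    (e : {c : X × X × X // C c ≠ 0} → ℕ) (K : ℤ) : GadgetVerts X C → ℤ
  | Sum.inl x => 6 * K * O0 x
  | Sum.inr (c, true) => 6 * K * max (O0 c.1.1) (O0 c.1.2.1) + 6 * (e c : ℤ) + 1
  | Sum.inr (c, false) => 6 * K * min (O0 c.1.1) (O0 c.1.2.1) - 6 * (e c : ℤ) - 1

lemma offset_inj {K p q r s : ℤ} (hK : 0 < K) (hr : 0 ≤ r) (hr' : r < K)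
    (hs : 0 ≤ s) (hs' : s < K) (h : K * p + r = K * q + s) : r = s := by
  have h2 : K * (p - q) = s - r := by linear_combination h
  rcases lt_trichotomy p q with hpq | hpq | hpq
  · exfalso
    have h1 : p - q ≤ -1 := by omega
    have := mul_le_mul_of_nonneg_left h1 hK.le
    linarith
  · subst hpq; linarith
  · exfalso
    have h1 : 1 ≤ p - q := by omega
    have := mul_le_mul_of_nonneg_left h1 hK.le
    linarith

lemma buildO_inj (C : X × X × X → ℝ) (O0 : X → ℤ) (hO0 : Function.Injective O0)
    (e : {c : X × X × X // C c ≠ 0} → ℕ) (he_inj : Function.Injective e)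
    (N : ℕ) (heN : ∀ c, e c < N) (K : ℤ) (hK : K = (N : ℤ) + 1) :
    Function.Injective (buildO C O0 e K) := by
  have hK0 : (0:ℤ) < K := by omega
  have hK6 : (0:ℤ) < 6 * K := by omega
  have hbnd : ∀ c, 6 * ((e c : ℤ)) + 1 < 6 * K := by
    intro c; have := heN c; omega
  have hbnd' : ∀ c, (0:ℤ) ≤ 6 * K - 6 * (e c : ℤ) - 1 ∧ 6 * K - 6 * (e c : ℤ) - 1 < 6 * K := by
    intro c; have := heN c; omega
  have hbnd'' : ∀ c, (0:ℤ) ≤ 6 * ((e c : ℤ)) + 1 := by intro c; positivity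
  intro v w h
  rcases v with x | ⟨c, bc⟩ <;> rcases w with x' | ⟨c', bc'⟩
  · simp only [buildO] at h
    exact congrArg Sum.inl (hO0 (mul_left_cancel₀ (by omega : (6*K:ℤ) ≠ 0) h))
  · exfalso
    cases bc' <;> simp only [buildO] at h
    · -- inl vs b_{c'}
      have h' : 6 * K * (O0 x) + 0 =
          6 * K * (min (O0 c'.1.1) (O0 c'.1.2.1) - 1) + (6 * K - 6 * (e c' : ℤ) - 1) := by
        linarith
      have := offset_inj hK6 le_rfl hK6 (hbnd' c').1 (hbnd' c').2 h'
      omega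
    · -- inl vs a_{c'}
      have h' : 6 * K * (O0 x) + 0 =
          6 * K * (max (O0 c'.1.1) (O0 c'.1.2.1)) + (6 * (e c' : ℤ) + 1) := by
        linarith
      have := offset_inj hK6 le_rfl hK6 (hbnd'' c') (hbnd c') h'
      omega
  · exfalso
    cases bc <;> simp only [buildO] at h
    · have h' : 6 * K * (O0 x') + 0 =
          6 * K * (min (O0 c.1.1) (O0 c.1.2.1) - 1) + (6 * K - 6 * (e c : ℤ) - 1) := by
        linarith
      have := offset_inj hK6 le_rfl hK6 (hbnd' c).1 (hbnd' c).2 h'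
      omega
    · have h' : 6 * K * (O0 x') + 0 =
          6 * K * (max (O0 c.1.1) (O0 c.1.2.1)) + (6 * (e c : ℤ) + 1) := by
        linarith
      have := offset_inj hK6 le_rfl hK6 (hbnd'' c) (hbnd c) h'
      omega
  · cases bc <;> cases bc' <;> simp only [buildO] at h
    · -- b vs b
      have h' : 6 * K * (min (O0 c.1.1) (O0 c.1.2.1) - 1) + (6 * K - 6 * (e c : ℤ) - 1) =
          6 * K * (min (O0 c'.1.1) (O0 c'.1.2.1) - 1) + (6 * K - 6 * (e c' : ℤ) - 1) := by
        linarith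
      have hr := offset_inj hK6 (hbnd' c).1 (hbnd' c).2 (hbnd' c').1 (hbnd' c').2 h'
      have : e c = e c' := by omega
      rw [he_inj this]
    · -- b vs a
      exfalso
      have h' : 6 * K * (min (O0 c.1.1) (O0 c.1.2.1) - 1) + (6 * K - 6 * (e c : ℤ) - 1) =
          6 * K * (max (O0 c'.1.1) (O0 c'.1.2.1)) + (6 * (e c' : ℤ) + 1) := by
        linarith
      have := offset_inj hK6 (hbnd' c).1 (hbnd' c).2 (hbnd'' c') (hbnd c') h'
      omega
    · -- a vs b
      exfalso
      have h' : 6 * K * (max (O0 c.1.1) (O0 c.1.2.1)) + (6 * (e c : ℤ) + 1) =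
          6 * K * (min (O0 c'.1.1) (O0 c'.1.2.1) - 1) + (6 * K - 6 * (e c' : ℤ) - 1) := by
        linarith
      have := offset_inj hK6 (hbnd'' c) (hbnd c) (hbnd' c').1 (hbnd' c').2 h'
      omega
    · -- a vs a
      have h' : 6 * K * (max (O0 c.1.1) (O0 c.1.2.1)) + (6 * (e c : ℤ) + 1) =
          6 * K * (max (O0 c'.1.1) (O0 c'.1.2.1)) + (6 * (e c' : ℤ) + 1) := by
        linarith
      have hr := offset_inj hK6 (hbnd'' c) (hbnd c) (hbnd'' c') (hbnd c') h'
      have : e c = e c' := by omega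
      rw [he_inj this]

lemma buildO_count (C : X × X × X → ℝ) (O0 : X → ℤ) (hO0 : Function.Injective O0)
    (e : {c : X × X × X // C c ≠ 0} → ℕ) (N : ℕ) (heN : ∀ c, e c < N)
    (K : ℤ) (hK : K = (N : ℤ) + 1)
    (c : {c : X × X × X // C c ≠ 0})
    (hd : c.1.1 ≠ c.1.2.1 ∧ c.1.1 ≠ c.1.2.2 ∧ c.1.2.1 ≠ c.1.2.2) :
    (((gadgetArcsOf c).filter fun p =>
        decide (buildO C O0 e K p.1 < buildO C O0 e K p.2)).length : ℝ)
      = 4 + extPred nbtwPerm3 ![O0 c.1.1, O0 c.1.2.1, O0 c.1.2.2] := by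
  have hK0 : (0:ℤ) < K := by omega
  have hK6 : (0:ℤ) < 6 * K := by omega
  have hbnd : 6 * ((e c : ℤ)) + 1 < 6 * K := by have := heN c; omega
  set vx := O0 c.1.1 with hvx
  set vy := O0 c.1.2.1 with hvy
  set vz := O0 c.1.2.2 with hvz
  have hxy : vx ≠ vy := fun h => hd.1 (hO0 h)
  have hxz : vx ≠ vz := fun h => hd.2.1 (hO0 h)
  have hyz : vy ≠ vz := fun h => hd.2.2 (hO0 h)
  have hscale : ∀ a b : ℤ, a < b → 6 * K * a + 6 * K ≤ 6 * K * b := by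
    intro a b hab
    have h1 : a + 1 ≤ b := hab
    have := mul_le_mul_of_nonneg_left h1 hK6.le
    linarith
  have hscale' : ∀ a b : ℤ, a ≤ b → 6 * K * a ≤ 6 * K * b := by
    intro a b hab
    have := mul_le_mul_of_nonneg_left hab hK6.le
    linarith
  -- values at the five vertices
  have hOx : buildO C O0 e K (Sum.inl c.1.1) = 6 * K * vx := rfl
  have hOy : buildO C O0 e K (Sum.inl c.1.2.1) = 6 * K * vy := rfl
  have hOz : buildO C O0 e K (Sum.inl c.1.2.2) = 6 * K * vz := rfl
  have hOa : buildO C O0 e K (Sum.inr (c, true)) = 6 * K * max vx vy + 6 * (e c : ℤ) + 1 := rfl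
  have hOb : buildO C O0 e K (Sum.inr (c, false)) = 6 * K * min vx vy - 6 * (e c : ℤ) - 1 := rfl
  have hbx : buildO C O0 e K (Sum.inr (c, false)) < buildO C O0 e K (Sum.inl c.1.1) := by
    rw [hOb, hOx]
    have := hscale' _ _ (min_le_left vx vy)
    have : (0:ℤ) ≤ 6 * (e c : ℤ) := by positivity
    have := hscale' (min vx vy) vx (min_le_left vx vy)
    omega
  have hby : buildO C O0 e K (Sum.inr (c, false)) < buildO C O0 e K (Sum.inl c.1.2.1) := by
    rw [hOb, hOy]
    have := hscale' (min vx vy) vy (min_le_right vx vy)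
    have : (0:ℤ) ≤ 6 * (e c : ℤ) := by positivity
    omega
  have hxa : buildO C O0 e K (Sum.inl c.1.1) < buildO C O0 e K (Sum.inr (c, true)) := by
    rw [hOx, hOa]
    have := hscale' vx (max vx vy) (le_max_left vx vy)
    have : (0:ℤ) ≤ 6 * (e c : ℤ) := by positivity
    omega
  have hya : buildO C O0 e K (Sum.inl c.1.2.1) < buildO C O0 e K (Sum.inr (c, true)) := by
    rw [hOy, hOa]
    have := hscale' vy (max vx vy) (le_max_right vx vy)
    have : (0:ℤ) ≤ 6 * (e c : ℤ) := by positivity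
    omega
  rw [extPred_distinct hxy hxz hyz]
  have harcs : gadgetArcsOf c =
      [(Sum.inr (c, false), Sum.inl c.1.1), (Sum.inl c.1.1, Sum.inr (c, true)),
       (Sum.inr (c, true), Sum.inl c.1.2.2), (Sum.inl c.1.2.2, Sum.inr (c, false)),
       (Sum.inr (c, false), Sum.inl c.1.2.1), (Sum.inl c.1.2.1, Sum.inr (c, true))] := rfl
  rw [harcs]
  by_cases hbtw : (vx < vz ∧ vz < vy) ∨ (vy < vz ∧ vz < vx)
  · rw [if_pos hbtw]
    have h4 : (([(Sum.inr (c, false), Sum.inl c.1.1), (Sum.inl c.1.1, Sum.inr (c, true)),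
       (Sum.inr (c, true), Sum.inl c.1.2.2), (Sum.inl c.1.2.2, Sum.inr (c, false)),
       (Sum.inr (c, false), Sum.inl c.1.2.1), (Sum.inl c.1.2.1, Sum.inr (c, true))] :
        List (GadgetVerts X C × GadgetVerts X C)).filter fun p =>
        decide (buildO C O0 e K p.1 < buildO C O0 e K p.2)).length = 4 := by
      apply len_four _ _ _ _ _ _ hbx hxa hby hya
      · -- ¬ a < z
        rw [hOa, hOz]
        have hzlt : vz < max vx vy := by omega
        have := hscale vz (max vx vy) hzlt
        omega
      · -- ¬ z < b
        rw [hOz, hOb]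
        have hzgt : min vx vy < vz := by omega
        have := hscale (min vx vy) vz hzgt
        omega
    rw [h4]
    norm_num
  · rw [if_neg hbtw]
    have h5 : (([(Sum.inr (c, false), Sum.inl c.1.1), (Sum.inl c.1.1, Sum.inr (c, true)),
       (Sum.inr (c, true), Sum.inl c.1.2.2), (Sum.inl c.1.2.2, Sum.inr (c, false)),
       (Sum.inr (c, false), Sum.inl c.1.2.1), (Sum.inl c.1.2.1, Sum.inr (c, true))] :
        List (GadgetVerts X C × GadgetVerts X C)).filter fun p =>
        decide (buildO C O0 e K p.1 < buildO C O0 e K p.2)).length = 5 := by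
      apply len_five _ _ _ _ _ _ hbx hxa hby hya
      rcases lt_or_gt_of_ne hxz with hxz' | hxz'
      ·
        have hzgt : max vx vy < vz := by
          rcases lt_or_gt_of_ne hyz with h1 | h1 <;> omega
        left
        constructor
        · rw [hOa, hOz]
          have := hscale (max vx vy) vz hzgt
          omega
        · rw [hOz, hOb]
          have := hscale' (min vx vy) vz (by omega)
          have : (0:ℤ) ≤ 6 * (e c : ℤ) := by positivity
          omega
      · have hzlt : vz < min vx vy := by
          rcases lt_or_gt_of_ne hyz with h1 | h1 <;> omega
        right
        constructor
        · rw [hOz, hOb]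
          have := hscale vz (min vx vy) hzlt
          omega
        · rw [hOa, hOz]
          have := hscale' vz (max vx vy) (by omega)
          have : (0:ℤ) ≤ 6 * (e c : ℤ) := by positivity
          omega
    rw [h5]
    norm_num

/-! ### Summation helpers -/

lemma subtype_sum (C : X × X × X → ℝ) (g : X × X × X → ℝ) (h0 : ∀ c, C c = 0 → g c = 0) :
    ∑ c : {c : X × X × X // C c ≠ 0}, g c.1 = ∑ c : X × X × X, g c := by
  classical
  rw [← Finset.sum_filter_of_ne (p := fun c => C c ≠ 0) (s := Finset.univ) (f := g)
    (fun c _ hg => fun hC => hg (h0 c hC))]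
  exact (Finset.sum_subtype (Finset.univ.filter fun c => C c ≠ 0) (by simp) g).symm

lemma sum_gadget (C : X × X × X → ℝ) (hsum : ∑ c : X × X × X, C c = 1)
    (E : X × X × X → ℝ) :
    ∑ c : {c : X × X × X // C c ≠ 0}, C c.1 / 6 * (4 + E c.1)
      = (4 + ∑ c : X × X × X, C c * E c) / 6 := by
  rw [subtype_sum C (fun c => C c / 6 * (4 + E c)) (fun c hC => by rw [hC]; ring)]
  have : ∀ c : X × X × X, C c / 6 * (4 + E c) = 4 / 6 * C c + 1 / 6 * (C c * E c) := by
    intro c; ring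
  rw [Finset.sum_congr rfl fun c _ => this c, Finset.sum_add_distrib,
    ← Finset.mul_sum, ← Finset.mul_sum, hsum]
  ring

/-! ### The main theorem -/

/-- the gadget reduction from Max-NBTW to MAS.
The maximum over injective orderings of the total satisfied arc weight of the gadget graph
equals `(5/6)·val(I) + (4/6)·(1 − val(I)) = (4 + val(I))/6`. -/
theorem mas_reduction (X : Type) [Fintype X] (hX : Nonempty X)
    (C : X × X × X → ℝ)
    (hnn : ∀ c, 0 ≤ C c) (hsum : ∑ c : X × X × X, C c = 1)
    (hdistinct : ∀ c : X × X × X, C c ≠ 0 →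
      c.1 ≠ c.2.1 ∧ c.1 ≠ c.2.2 ∧ c.2.1 ≠ c.2.2) :
    IsGreatest {w : ℝ | ∃ O : GadgetVerts X C → ℤ, Function.Injective O ∧
        w = gadgetWeight C O}
      ((4 + nbtwVal C) / 6) := by
  classical
  constructor
  · -- membership: construct an optimal ordering
    obtain ⟨O0, hO0val⟩ := nbtwVal_attained C
    set N : ℕ := Fintype.card {c : X × X × X // C c ≠ 0} with hN
    set e : {c : X × X × X // C c ≠ 0} → ℕ := fun c => ((Fintype.equivFin _) c : ℕ) with he
    have he_inj : Function.Injective e := fun c c' h =>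
      (Fintype.equivFin _).injective (Fin.ext h)
    have heN : ∀ c, e c < N := fun c => ((Fintype.equivFin _) c).2
    refine ⟨buildO C O0.1 e ((N : ℤ) + 1),
      buildO_inj C O0.1 O0.2 e he_inj N heN _ rfl, ?_⟩
    unfold gadgetWeight
    have hterm : ∀ c : {c : X × X × X // C c ≠ 0},
        C c.1 / 6 * (((gadgetArcsOf c).filter fun p =>
          decide (buildO C O0.1 e ((N : ℤ) + 1) p.1 < buildO C O0.1 e ((N : ℤ) + 1) p.2)).length : ℝ)
        = C c.1 / 6 * (4 + extPred nbtwPerm3 ![O0.1 c.1.1, O0.1 c.1.2.1, O0.1 c.1.2.2]) := by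
      intro c
      rw [buildO_count C O0.1 O0.2 e N heN _ rfl c (hdistinct c.1 c.2)]
    rw [Finset.sum_congr rfl fun c _ => hterm c,
      sum_gadget C hsum (fun c => extPred nbtwPerm3 ![O0.1 c.1, O0.1 c.2.1, O0.1 c.2.2])]
    rw [show (∑ c : X × X × X, C c * extPred nbtwPerm3 ![O0.1 c.1, O0.1 c.2.1, O0.1 c.2.2])
        = objVal C O0.1 from rfl, hO0val]
  · -- upper bound
    rintro w ⟨O, hinj, rfl⟩
    have hOinl : Function.Injective (O ∘ Sum.inl) :=
      fun a b h => Sum.inl_injective (hinj h)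
    have hterm : ∀ c : {c : X × X × X // C c ≠ 0},
        C c.1 / 6 * (((gadgetArcsOf c).filter fun p => decide (O p.1 < O p.2)).length : ℝ)
        ≤ C c.1 / 6 *
          (4 + extPred nbtwPerm3 ![O (Sum.inl c.1.1), O (Sum.inl c.1.2.1), O (Sum.inl c.1.2.2)]) := by
      intro c
      have hd := hdistinct c.1 c.2
      have hxy : O (Sum.inl c.1.1) ≠ O (Sum.inl c.1.2.1) :=
        fun h => hd.1 (Sum.inl_injective (hinj h))
      have hxz : O (Sum.inl c.1.1) ≠ O (Sum.inl c.1.2.2) :=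
        fun h => hd.2.1 (Sum.inl_injective (hinj h))
      have hyz : O (Sum.inl c.1.2.1) ≠ O (Sum.inl c.1.2.2) :=
        fun h => hd.2.2 (Sum.inl_injective (hinj h))
      apply mul_le_mul_of_nonneg_left _ (div_nonneg (hnn c.1) (by norm_num) : (0:ℝ) ≤ C c.1 / 6)
      rw [extPred_distinct hxy hxz hyz]
      have harcs : gadgetArcsOf c =
          [(Sum.inr (c, false), Sum.inl c.1.1), (Sum.inl c.1.1, Sum.inr (c, true)),
           (Sum.inr (c, true), Sum.inl c.1.2.2), (Sum.inl c.1.2.2, Sum.inr (c, false)),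
           (Sum.inr (c, false), Sum.inl c.1.2.1), (Sum.inl c.1.2.1, Sum.inr (c, true))] := rfl
      rw [harcs]
      split_ifs with hbtw
      · have := len_le_four O (Sum.inr (c, false)) (Sum.inl c.1.1) (Sum.inr (c, true))
          (Sum.inl c.1.2.2) (Sum.inl c.1.2.1) hbtw
        push_cast
        calc ((([(Sum.inr (c, false), Sum.inl c.1.1), (Sum.inl c.1.1, Sum.inr (c, true)),
           (Sum.inr (c, true), Sum.inl c.1.2.2), (Sum.inl c.1.2.2, Sum.inr (c, false)),
           (Sum.inr (c, false), Sum.inl c.1.2.1), (Sum.inl c.1.2.1, Sum.inr (c, true))] :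
            List (GadgetVerts X C × GadgetVerts X C)).filter fun p =>
            decide (O p.1 < O p.2)).length : ℝ) ≤ 4 := by exact_mod_cast this
          _ = 4 + 0 := by ring
      · have := len_le_five O (Sum.inr (c, false)) (Sum.inl c.1.1) (Sum.inr (c, true))
          (Sum.inl c.1.2.2) (Sum.inl c.1.2.1)
        calc ((([(Sum.inr (c, false), Sum.inl c.1.1), (Sum.inl c.1.1, Sum.inr (c, true)),
           (Sum.inr (c, true), Sum.inl c.1.2.2), (Sum.inl c.1.2.2, Sum.inr (c, false)),
           (Sum.inr (c, false), Sum.inl c.1.2.1), (Sum.inl c.1.2.1, Sum.inr (c, true))] :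
            List (GadgetVerts X C × GadgetVerts X C)).filter fun p =>
            decide (O p.1 < O p.2)).length : ℝ) ≤ 5 := by exact_mod_cast this
          _ = 4 + 1 := by ring
    calc gadgetWeight C O
        ≤ ∑ c : {c : X × X × X // C c ≠ 0}, C c.1 / 6 *
          (4 + extPred nbtwPerm3 ![O (Sum.inl c.1.1), O (Sum.inl c.1.2.1), O (Sum.inl c.1.2.2)]) :=
          Finset.sum_le_sum fun c _ => hterm c
      _ = (4 + ∑ c : X × X × X, C c *
            extPred nbtwPerm3 ![O (Sum.inl c.1), O (Sum.inl c.2.1), O (Sum.inl c.2.2)]) / 6 :=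
          sum_gadget C hsum
            (fun c => extPred nbtwPerm3 ![O (Sum.inl c.1), O (Sum.inl c.2.1), O (Sum.inl c.2.2)])
      _ = (4 + objVal C (O ∘ Sum.inl)) / 6 := rfl
      _ ≤ (4 + nbtwVal C) / 6 := by
          have := le_nbtwVal C ⟨O ∘ Sum.inl, hOinl⟩
          linarith

end OCSPPaper
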